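/- Let Q ⊆ ℝ^K be a nonempty closed convex set, let F : ℝ^K → ℝ^K be monotone on Q, let φ : ℝ^K → ℝ be convex and differentiable, and let ε > 0. If p ∈ Q solves the perturbed variational inequality VI(Q, F + ε∇φ), then φ(p) ≤ φ(s) for every solution s of VI(Q, F); that is, p minimizes the merit function φ over the solution set SOL(Q, F). -/

import Mathlib

open scoped RealInnerProductSpace

/-- Gradient inequality for a convex differentiable function. -/
lemma grad_ineq {K : ℕ} (φ : EuclideanSpace ℝ (Fin K) → ℝ) (hφ : ConvexOn ℝ Set.univ φ)
    (p v : EuclideanSpace ℝ (Fin K)) (gp : EuclideanSpace ℝ (Fin K))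
    (hg : HasGradientAt φ gp p) :
    φ p + ⟪gp, v⟫ ≤ φ (p + v) := by
  set f : ℝ → ℝ := fun t => φ (p + t • v) with hf
  have hconv : ConvexOn ℝ Set.univ f := by
    have := (hφ.comp_affineMap (AffineMap.lineMap p (p + v))).subset
      (Set.subset_univ _) convex_univ
    have heq : (φ ∘ AffineMap.lineMap p (p + v)) = f := by
      funext t
      simp [f, AffineMap.lineMap_apply]
      rw [add_comm]
    rwa [heq] at this
  have hderiv : HasDerivAt f ⟪gp, v⟫ 0 := by
    have hc : HasDerivAt (fun t : ℝ => p + t • v) v 0 := by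
      simpa using ((hasDerivAt_id (0:ℝ)).smul_const v).const_add p
    have hgf : HasFDerivAt φ ((InnerProductSpace.toDual ℝ _) gp) (p + (0:ℝ) • v) := by
      simpa using hasGradientAt_iff_hasFDerivAt.mp hg
    have := hgf.comp_hasDerivAt 0 hc
    exact this
  have hslope := hconv.le_slope_of_hasDerivAt (Set.mem_univ (0:ℝ)) (Set.mem_univ (1:ℝ))
    one_pos hderiv
  have : ⟪gp, v⟫ ≤ f 1 - f 0 := by simpa [slope, f] using hslope
  have h0 : f 0 = φ p := by simp [f]
  have h1 : f 1 = φ (p + v) := by simp [f]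
  linarith

/-- A solution of the perturbed problem `VI(Q, F + ε∇φ)` minimizes the convex
merit function `φ` over the solution set `SOL(Q, F)` of the monotone problem. -/
theorem stmt15 (K : ℕ) (Q : Set (EuclideanSpace ℝ (Fin K))) (hQne : Q.Nonempty)
    (hQcl : IsClosed Q) (hQcv : Convex ℝ Q)
    (F : EuclideanSpace ℝ (Fin K) → EuclideanSpace ℝ (Fin K))
    (hF : ∀ x ∈ Q, ∀ y ∈ Q, 0 ≤ ⟪F x - F y, x - y⟫)
    (φ : EuclideanSpace ℝ (Fin K) → ℝ) (hφ : ConvexOn ℝ Set.univ φ)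
    (g : EuclideanSpace ℝ (Fin K) → EuclideanSpace ℝ (Fin K))
    (hg : ∀ x, HasGradientAt φ (g x) x)
    (ε : ℝ) (hε : 0 < ε)
    (p : EuclideanSpace ℝ (Fin K)) (hp : p ∈ Q)
    (hpsol : ∀ y ∈ Q, 0 ≤ ⟪F p + ε • g p, y - p⟫) :
    ∀ s ∈ Q, (∀ x ∈ Q, 0 ≤ ⟪F s, x - s⟫) → φ p ≤ φ s := by
  intro s hs hssol
  have h1 : 0 ≤ ⟪F p + ε • g p, s - p⟫ := hpsol s hs
  have h2 : 0 ≤ ⟪F s, p - s⟫ := hssol p hp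
  have h3 : 0 ≤ ⟪F p - F s, p - s⟫ := hF p hp s hs
  -- ⟪F p, s - p⟫ ≤ 0
  have h4 : ⟪F p, s - p⟫ ≤ 0 := by
    have e1 : ⟪F p - F s, p - s⟫ = -⟪F p, s - p⟫ - ⟪F s, p - s⟫ := by
      rw [inner_sub_left]
      rw [show (s - p : EuclideanSpace ℝ (Fin K)) = -(p - s) by abel, inner_neg_right]
      ring
    linarith
  have h5 : 0 ≤ ε * ⟪g p, s - p⟫ := by
    have : ⟪F p + ε • g p, s - p⟫ = ⟪F p, s - p⟫ + ε * ⟪g p, s - p⟫ := by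
      rw [inner_add_left, real_inner_smul_left]
    linarith
  have h6 : 0 ≤ ⟪g p, s - p⟫ := nonneg_of_mul_nonneg_right h5 hε
  have := grad_ineq φ hφ p (s - p) (g p) (hg p)
  simpa using le_trans (by linarith) this
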